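/- Let λ ≥ 1 and let G be the directed multigraph on the three vertices {s, x, t} consisting of λ parallel edges from s to x and λ + 1 parallel edges from x to t. Then every family B of (s,t)-flows of G with the property that for every edge e of G, B contains a flow f with f(e) = 0 whose value equals the maximum (s,t)-flow value of G − e, has cardinality at least 2λ + 1. -/

import Mathlib

open Finset

/-- A finite directed multigraph on vertex type `V` with edge type `E`:
each edge `e` has a source `src e` and a target `tgt e`. -/
structure Digraph' (V E : Type) where
  src : E → V
  tgt : E → V

namespace Digraph'

variable {V E : Type} [Fintype V] [DecidableEq V] [Fintype E] [DecidableEq E]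

/-- `h : E → ℕ` satisfies flow conservation at every vertex other than `s` and `t`:
the sum over incoming edges equals the sum over outgoing edges. -/
def Conserves (G : Digraph' V E) (s t : V) (h : E → ℕ) : Prop :=
  ∀ v : V, v ≠ s → v ≠ t →
    ∑ e ∈ univ.filter (fun e => G.tgt e = v), h e =
      ∑ e ∈ univ.filter (fun e => G.src e = v), h e

/-- The value of `h`: the net flow out of `s`. -/
def flowValue (G : Digraph' V E) (s : V) (h : E → ℕ) : ℤ :=
  (∑ e ∈ univ.filter (fun e => G.src e = s), (h e : ℤ)) -
    ∑ e ∈ univ.filter (fun e => G.tgt e = s), (h e : ℤ)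

/-- An `(s,t)`-flow of a unit-capacity digraph: a `{0,1}`-valued function on edges
satisfying flow conservation at every vertex other than `s` and `t`. -/
def IsFlow (G : Digraph' V E) (s t : V) (f : E → ℕ) : Prop :=
  (∀ e, f e ≤ 1) ∧ G.Conserves s t f

/-- One step along an edge not belonging to `F`. -/
def stepAvoid (G : Digraph' V E) (F : Finset E) (u v : V) : Prop :=
  ∃ e, e ∉ F ∧ G.src e = u ∧ G.tgt e = v

/-- Reachability by a directed path using no edge of `F`. -/
def ReachAvoid (G : Digraph' V E) (F : Finset E) : V → V → Prop :=
  Relation.ReflTransGen (G.stepAvoid F)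

/-- `C` is an `(s,t)`-cut: after deleting the edges of `C` there is no directed
path from `s` to `t`. -/
def IsCut (G : Digraph' V E) (s t : V) (C : Finset E) : Prop :=
  ¬ G.ReachAvoid C s t

/-- An `(s,t)`-min-cut: an `(s,t)`-cut of minimum cardinality. -/
def IsMinCut (G : Digraph' V E) (s t : V) (C : Finset E) : Prop :=
  G.IsCut s t C ∧ ∀ C' : Finset E, G.IsCut s t C' → C.card ≤ C'.card

/-- A minimal `(s,t)`-cut: no proper subset of it is an `(s,t)`-cut. -/
def IsMinimalCut (G : Digraph' V E) (s t : V) (C : Finset E) : Prop :=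
  G.IsCut s t C ∧ ∀ C' : Finset E, C' ⊂ C → ¬ G.IsCut s t C'

/-- An edge is critical if it belongs to some `(s,t)`-min-cut. -/
def Critical (G : Digraph' V E) (s t : V) (e : E) : Prop :=
  ∃ C : Finset E, G.IsMinCut s t C ∧ e ∈ C

/-- `m` is the maximum `(s,t)`-flow value of `G − F`, i.e. the largest value of an
`(s,t)`-flow of `G` vanishing on every edge of `F`. -/
def IsMaxFlowValue (G : Digraph' V E) (s t : V) (F : Finset E) (m : ℤ) : Prop :=
  (∃ f, G.IsFlow s t f ∧ (∀ e ∈ F, f e = 0) ∧ G.flowValue s f = m) ∧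
    ∀ f, G.IsFlow s t f → (∀ e ∈ F, f e = 0) → G.flowValue s f ≤ m

/-- The residual graph `G_f` of a `{0,1}`-flow `f`: each edge with `f e = 1`
is reversed, each edge with `f e = 0` is kept as is. -/
def residual (G : Digraph' V E) (f : E → ℕ) : Digraph' V E where
  src e := if f e = 1 then G.tgt e else G.src e
  tgt e := if f e = 1 then G.src e else G.tgt e

end Digraph'

/-- The three-vertex graph on `{s, x, t} = {0, 1, 2}` with `λ` parallel edges from
`s` to `x` and `λ+1` parallel edges from `x` to `t`. -/
def threeGraph (lam : ℕ) : Digraph' (Fin 3) (Fin lam ⊕ Fin (lam + 1)) where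
  src e := match e with
    | .inl _ => 0
    | .inr _ => 1
  tgt e := match e with
    | .inl _ => 1
    | .inr _ => 2

lemma sum_ite_mem_zero {α : Type*} [Fintype α] [DecidableEq α] (s : Finset α) :
    ∑ k : α, (if k ∈ s then 0 else 1) = Fintype.card α - s.card := by
  have h : ∀ k : α, (if k ∈ s then (0:ℕ) else 1) = if k ∈ univ \ s then 1 else 0 := by
    intro k; by_cases hk : k ∈ s <;> simp [hk]
  simp_rw [h]
  rw [Finset.sum_ite_mem, Finset.univ_inter, Finset.sum_const, smul_eq_mul, mul_one,
    Finset.card_sdiff_of_subset (Finset.subset_univ s), Finset.card_univ]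

lemma sum_le_of_zeros {α : Type*} [Fintype α] [DecidableEq α] (g : α → ℕ)
    (hg : ∀ k, g k ≤ 1) (s : Finset α) (hz : ∀ k ∈ s, g k = 0) :
    ∑ k : α, g k ≤ Fintype.card α - s.card := by
  have h1 : ∑ k : α, g k = ∑ k ∈ univ \ s, g k := by
    refine (Finset.sum_subset (Finset.sdiff_subset) ?_).symm
    intro x _ hx
    exact hz x (by simpa using hx)
  rw [h1]
  calc ∑ k ∈ univ \ s, g k ≤ ∑ k ∈ univ \ s, 1 := Finset.sum_le_sum fun i _ => hg i
    _ = (univ \ s).card := by simp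
    _ = Fintype.card α - s.card := by rw [Finset.card_sdiff_of_subset (Finset.subset_univ s)]; simp

lemma value_eq (lam : ℕ) (f : (Fin lam ⊕ Fin (lam+1)) → ℕ) :
    (threeGraph lam).flowValue 0 f = ∑ i : Fin lam, (f (.inl i) : ℤ) := by
  unfold Digraph'.flowValue threeGraph
  rw [Finset.sum_filter, Finset.sum_filter, Fintype.sum_sum_type, Fintype.sum_sum_type]
  simp

lemma conserve_eq (lam : ℕ) (f : (Fin lam ⊕ Fin (lam+1)) → ℕ)
    (h : (threeGraph lam).Conserves 0 2 f) :
    ∑ i : Fin lam, f (.inl i) = ∑ j : Fin (lam+1), f (.inr j) := by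
  have := h 1 (by decide) (by decide)
  unfold threeGraph at this
  rw [Finset.sum_filter, Finset.sum_filter, Fintype.sum_sum_type, Fintype.sum_sum_type] at this
  simpa using this

def gL (lam : ℕ) (i : Fin lam) : (Fin lam ⊕ Fin (lam+1)) → ℕ
  | .inl k => if k = i then 0 else 1
  | .inr k => if k = Fin.last lam ∨ k = i.castSucc then 0 else 1

def gR (lam : ℕ) (j : Fin (lam+1)) : (Fin lam ⊕ Fin (lam+1)) → ℕ
  | .inl _ => 1
  | .inr k => if k = j then 0 else 1

lemma gL_isFlow (lam : ℕ) (i : Fin lam) : (threeGraph lam).IsFlow 0 2 (gL lam i) := by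
  constructor
  · rintro (k | k) <;> simp [gL] <;> split <;> simp
  · intro v hv0 hv2
    have hv1 : v = 1 := by omega
    subst hv1
    unfold threeGraph
    rw [Finset.sum_filter, Finset.sum_filter, Fintype.sum_sum_type, Fintype.sum_sum_type]
    simp only [gL]
    have h1 : ∑ k : Fin lam, (if k = i then 0 else 1) = lam - 1 := by
      have := sum_ite_mem_zero ({i} : Finset (Fin lam))
      simpa using this
    have h2 : ∑ k : Fin (lam+1), (if k = Fin.last lam ∨ k = i.castSucc then 0 else 1)
        = lam - 1 := by
      have := sum_ite_mem_zero ({Fin.last lam, i.castSucc} : Finset (Fin (lam+1)))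
      have hne : Fin.last lam ≠ i.castSucc := (Fin.castSucc_lt_last i).ne'
      rw [Finset.card_insert_of_notMem (by simpa using hne), Finset.card_singleton] at this
      simp only [Finset.mem_insert, Finset.mem_singleton] at this
      rw [this, Fintype.card_fin]
      omega
    simp only [show ((2:Fin 3)=1) = False from by simp, show ((0:Fin 3)=1) = False from by simp,
      if_true, if_false, Finset.sum_const_zero, add_zero, zero_add]
    rw [h1, h2]

lemma gR_isFlow (lam : ℕ) (j : Fin (lam+1)) : (threeGraph lam).IsFlow 0 2 (gR lam j) := by
  constructor
  · rintro (k | k) <;> simp [gR] <;> split <;> simp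
  · intro v hv0 hv2
    have hv1 : v = 1 := by omega
    subst hv1
    unfold threeGraph
    rw [Finset.sum_filter, Finset.sum_filter, Fintype.sum_sum_type, Fintype.sum_sum_type]
    simp only [gR]
    have h2 : ∑ k : Fin (lam+1), (if k = j then 0 else 1) = lam := by
      have := sum_ite_mem_zero ({j} : Finset (Fin (lam+1)))
      simpa using this
    simp only [show ((2:Fin 3)=1) = False from by simp, show ((0:Fin 3)=1) = False from by simp,
      if_true, if_false, Finset.sum_const_zero, add_zero, zero_add]
    rw [h2]
    simp

lemma gL_value (lam : ℕ) (i : Fin lam) :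
    ∑ k : Fin lam, gL lam i (.inl k) = lam - 1 := by
  have := sum_ite_mem_zero ({i} : Finset (Fin lam))
  simpa [gL] using this

lemma gR_value (lam : ℕ) (j : Fin (lam+1)) :
    ∑ k : Fin lam, gR lam j (.inl k) = lam := by
  simp [gR]

/-- Let `λ ≥ 1` and let `G` be the directed multigraph on three
vertices `s, x, t` with `λ` parallel edges from `s` to `x` and `λ+1` parallel edges
from `x` to `t`. Every family `B` of `(s,t)`-flows of `G` such that for every edge
`e`, `B` contains a flow `f` with `f e = 0` whose value equals the maximum
`(s,t)`-flow value of `G − e`, has cardinality at least `2λ + 1`. -/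
theorem stmt18 (lam : ℕ) (hlam : 1 ≤ lam)
    (B : Finset ((Fin lam ⊕ Fin (lam + 1)) → ℕ))
    (hflow : ∀ f ∈ B, (threeGraph lam).IsFlow 0 2 f)
    (hcover : ∀ e : Fin lam ⊕ Fin (lam + 1), ∃ f ∈ B, f e = 0 ∧
      (threeGraph lam).IsMaxFlowValue 0 2 {e} ((threeGraph lam).flowValue 0 f)) :
    2 * lam + 1 ≤ B.card := by
  classical
  have hP : ∀ e : Fin lam ⊕ Fin (lam+1), ∃ f ∈ B, f e = 0 ∧
      (Sum.elim (fun _ => ∑ k : Fin lam, f (.inl k) = lam - 1)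
        (fun _ => ∑ k : Fin lam, f (.inl k) = lam ∧ ∑ k : Fin (lam+1), f (.inr k) = lam) e) := by
    intro e
    obtain ⟨f, hfB, hf0, hmax⟩ := hcover e
    refine ⟨f, hfB, hf0, ?_⟩
    have hflowf := hflow f hfB
    have castS : ∀ g : (Fin lam ⊕ Fin (lam+1)) → ℕ,
        (threeGraph lam).flowValue 0 g = ((∑ k : Fin lam, g (.inl k) : ℕ) : ℤ) := by
      intro g; rw [value_eq]; push_cast; ring
    cases e with
    | inl i =>
      have hub : ∑ k : Fin lam, f (.inl k) ≤ lam - 1 := by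
        have := sum_le_of_zeros (fun k => f (.inl k)) (fun k => hflowf.1 _)
          {i} (by simpa using hf0)
        simpa using this
      have hlb := hmax.2 (gL lam i) (gL_isFlow lam i) (by simp [gL])
      rw [castS, castS, Nat.cast_le] at hlb
      simp only [Sum.elim_inl]
      have := gL_value lam i
      omega
    | inr j =>
      have hub : ∑ k : Fin lam, f (.inl k) ≤ lam := by
        have := sum_le_of_zeros (fun k => f (.inl k)) (fun k => hflowf.1 _)
          ∅ (by simp)
        simpa using this
      have hlb := hmax.2 (gR lam j) (gR_isFlow lam j) (by simp [gR])
      rw [castS, castS, Nat.cast_le] at hlb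
      have hgv := gR_value lam j
      have hSf : ∑ k : Fin lam, f (.inl k) = lam := by omega
      have hTf : ∑ k : Fin (lam+1), f (.inr k) = lam := by
        exact (conserve_eq lam f hflowf.2).symm.trans hSf
      simp only [Sum.elim_inr]
      exact ⟨hSf, hTf⟩
  choose F hFB hF0 hFval using hP
  have hinj : Function.Injective (fun e => (⟨F e, hFB e⟩ : {g // g ∈ B})) := by
    intro e e' heq
    simp only [Subtype.mk.injEq] at heq
    by_contra hne
    match e, e' with
    | .inl i, .inl i' =>
      have hii : i ≠ i' := fun h => hne (by rw [h])
      have h0 : F (.inl i) (.inl i) = 0 := hF0 _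
      have h0' : F (.inl i) (.inl i') = 0 := by rw [heq]; exact hF0 _
      have hval := hFval (.inl i)
      simp only [Sum.elim_inl] at hval
      have hub := sum_le_of_zeros (fun k => F (.inl i) (.inl k))
        (fun k => (hflow _ (hFB _)).1 _) {i, i'} (by
          intro k hk
          simp only [Finset.mem_insert, Finset.mem_singleton] at hk
          rcases hk with rfl | rfl <;> assumption)
      rw [Finset.card_insert_of_notMem (by simpa using hii), Finset.card_singleton] at hub
      simp only [Fintype.card_fin] at hub
      have h2 : 2 ≤ lam := by
        have : 1 < Fintype.card (Fin lam) := Fintype.one_lt_card_iff_nontrivial.mpr ⟨⟨i, i', hii⟩⟩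
        simp at this
        omega
      omega
    | .inl i, .inr j =>
      have hval := hFval (.inl i)
      have hval' := hFval (.inr j)
      simp only [Sum.elim_inl] at hval
      simp only [Sum.elim_inr] at hval'
      rw [heq] at hval
      omega
    | .inr j, .inl i =>
      have hval := hFval (.inl i)
      have hval' := hFval (.inr j)
      simp only [Sum.elim_inl] at hval
      simp only [Sum.elim_inr] at hval'
      rw [heq] at hval'
      omega
    | .inr j, .inr j' =>
      have hjj : j ≠ j' := fun h => hne (by rw [h])
      have h0 : F (.inr j) (.inr j) = 0 := hF0 _
      have h0' : F (.inr j) (.inr j') = 0 := by rw [heq]; exact hF0 _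
      have hval := hFval (.inr j)
      simp only [Sum.elim_inr] at hval
      have hub := sum_le_of_zeros (fun k => F (.inr j) (.inr k))
        (fun k => (hflow _ (hFB _)).1 _) {j, j'} (by
          intro k hk
          simp only [Finset.mem_insert, Finset.mem_singleton] at hk
          rcases hk with rfl | rfl <;> assumption)
      rw [Finset.card_insert_of_notMem (by simpa using hjj), Finset.card_singleton] at hub
      simp only [Fintype.card_fin] at hub
      omega
  have := Fintype.card_le_of_injective _ hinj
  simp [Fintype.card_coe, two_mul] at this ⊢
  omega
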